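/- Under the assumptions of the previous construction (X has conditionally independent components below the threshold γ, agrees with the comonotone vector Y above it, and each Xᵢ ≤ F⁻¹_{μᵢ}(γ) a.s. on {U ≤ γ}), for every a ∈ ℝ with a ≥ q(γ) := f(F⁻¹_{μ₁}(γ),…,F⁻¹_{μₙ}(γ)) we have P(f(Y) ≤ a) = P(f(X) ≤ a), where Yᵢ = F⁻¹_{μᵢ}(U). -/

import Mathlib

open MeasureTheory

/-- Left-continuous quantile function `F⁻¹_μ(u) = inf {a : F_μ(a) ≥ u}`. -/
noncomputable def qf (μ : Measure ℝ) (u : ℝ) : ℝ :=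
  sInf {a : ℝ | u ≤ (μ (Set.Iic a)).toReal}

lemma qf_cdf_set_nonempty (μ : Measure ℝ) [IsProbabilityMeasure μ] {v : ℝ} (hv : v < 1) :
    {a : ℝ | v ≤ (μ (Set.Iic a)).toReal}.Nonempty := by
  have h := tendsto_measure_Iic_atTop μ
  have h' : Filter.Tendsto (fun x => (μ (Set.Iic x)).toReal) Filter.atTop (nhds 1) := by
    have := (ENNReal.tendsto_toReal (by simp : μ Set.univ ≠ ⊤)).comp h
    simpa [Function.comp_def] using this
  obtain ⟨x, hx⟩ := (h'.eventually (eventually_ge_nhds hv)).exists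
  exact ⟨x, hx⟩

lemma qf_cdf_set_bddBelow (μ : Measure ℝ) [IsProbabilityMeasure μ] {u : ℝ} (hu : 0 < u) :
    BddBelow {a : ℝ | u ≤ (μ (Set.Iic a)).toReal} := by
  have h : Filter.Tendsto (fun x : ℝ => μ (Set.Iic x)) Filter.atBot (nhds 0) := by
    have hs : ∀ x : ℝ, NullMeasurableSet (Set.Iic x) μ :=
      fun x => (measurableSet_Iic).nullMeasurableSet
    have hm : Monotone (fun x : ℝ => Set.Iic x) := fun x y hxy => Set.Iic_subset_Iic.2 hxy
    have hf : ∃ x : ℝ, μ (Set.Iic x) ≠ ⊤ := ⟨0, measure_ne_top μ _⟩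
    have := tendsto_measure_iInter_atBot hs hm hf
    have hempty : (⋂ x : ℝ, Set.Iic x) = ∅ := by
      ext y; simp only [Set.mem_iInter, Set.mem_Iic, Set.mem_empty_iff_false, iff_false]
      intro h'
      have := h' (y - 1); linarith
    rw [hempty] at this; simpa [Function.comp_def] using this
  have h' : Filter.Tendsto (fun x : ℝ => (μ (Set.Iic x)).toReal) Filter.atBot (nhds 0) := by
    have := (ENNReal.tendsto_toReal (by simp : (0 : ENNReal) ≠ ⊤)).comp h
    simpa [Function.comp_def] using this
  obtain ⟨b, hb⟩ := (h'.eventually_lt_const hu).exists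
  refine ⟨b, fun x hx => ?_⟩
  by_contra hbx
  push_neg at hbx
  have hmono : (μ (Set.Iic x)).toReal ≤ (μ (Set.Iic b)).toReal :=
    ENNReal.toReal_mono (measure_ne_top μ _) (measure_mono (Set.Iic_subset_Iic.2 hbx.le))
  exact absurd hx (by simp only [Set.mem_setOf_eq]; push_neg; linarith)

lemma qf_mono (μ : Measure ℝ) [IsProbabilityMeasure μ] {u v : ℝ} (hu : 0 < u) (huv : u ≤ v)
    (hv : v < 1) : qf μ u ≤ qf μ v := by
  apply csInf_le_csInf (qf_cdf_set_bddBelow μ hu) (qf_cdf_set_nonempty μ hv)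
  intro x hx
  exact le_trans huv hx

/-- Under the upper-comonotone construction (components bounded by `F⁻¹_{μᵢ}(γ)` a.s. on
`{U ≤ γ}` and agreeing with the comonotone vector `Y` on `{U > γ}`), for every
`a ≥ q(γ)` the distribution functions of `f(X)` and `f(Y)` agree:
`P(f(Y) ≤ a) = P(f(X) ≤ a)`. -/
theorem cdf_agree_above_threshold {Ω : Type*} [MeasurableSpace Ω] (P : Measure Ω)
    [IsProbabilityMeasure P]
    (n : ℕ) (U : Ω → ℝ) (hU : Measurable U)
    (hUunif : P.map U = volume.restrict (Set.Ioo (0 : ℝ) 1))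
    (γ : ℝ) (hγ : γ ∈ Set.Ioo (0 : ℝ) 1)
    (μ : Fin n → ProbabilityMeasure ℝ) (X : Fin n → Ω → ℝ)
    (hXm : ∀ i, Measurable (X i))
    (hXd : ∀ i, P.map (X i) = (μ i).toMeasure)
    (hindep : ProbabilityTheory.iIndepFun X
      ((ENNReal.ofReal γ)⁻¹ • P.restrict {ω | U ω ≤ γ}))
    (h0 : ∀ i, P ({ω | qf (μ i).toMeasure γ < X i ω} ∩ {ω | U ω ≤ γ}) = 0)
    (hagree : ∀ i ω, γ < U ω → X i ω = qf (μ i).toMeasure (U ω))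
    (f : (Fin n → ℝ) → ℝ) (hf : Monotone f)
    (hlc : ∀ x : Fin n → ℝ,
      Filter.Tendsto f (nhdsWithin x {y | ∀ i, y i < x i}) (nhds (f x)))
    (a : ℝ) (ha : f (fun i => qf (μ i).toMeasure γ) ≤ a) :
    P {ω | f (fun i => qf (μ i).toMeasure (U ω)) ≤ a}
      = P {ω | f (fun i => X i ω) ≤ a} := by
  -- null sets
  have hU0 : P {ω | U ω ≤ 0} = 0 := by
    have : P {ω | U ω ≤ 0} = P.map U (Set.Iic 0) := by
      rw [Measure.map_apply hU measurableSet_Iic]; rfl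
    rw [this, hUunif, Measure.restrict_apply measurableSet_Iic]
    have : Set.Iic (0:ℝ) ∩ Set.Ioo (0:ℝ) 1 = ∅ := by
      ext x; simp only [Set.mem_inter_iff, Set.mem_Iic, Set.mem_Ioo,
        Set.mem_empty_iff_false, iff_false]
      rintro ⟨h1, h2, _⟩; linarith
    rw [this]; simp
  set N : Set Ω :=
    {ω | U ω ≤ 0} ∪ ⋃ i, ({ω | qf (μ i).toMeasure γ < X i ω} ∩ {ω | U ω ≤ γ}) with hN
  have hN0 : P N = 0 := by
    apply le_antisymm _ zero_le
    calc P N ≤ P {ω | U ω ≤ 0}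
        + P (⋃ i, ({ω | qf (μ i).toMeasure γ < X i ω} ∩ {ω | U ω ≤ γ})) :=
          measure_union_le _ _
      _ ≤ 0 + ∑ i, P ({ω | qf (μ i).toMeasure γ < X i ω} ∩ {ω | U ω ≤ γ}) := by
          rw [hU0]; gcongr; exact measure_iUnion_fintype_le _ _
      _ = 0 := by simp [h0]
  apply measure_congr
  have hNc : Nᶜ ∈ ae P := compl_mem_ae_iff.mpr hN0
  filter_upwards [hNc] with ω hω
  simp only [hN, Set.compl_union, Set.mem_inter_iff, Set.mem_compl_iff, Set.mem_setOf_eq,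
    Set.mem_iUnion, not_exists] at hω
  obtain ⟨hω1, hω2⟩ := hω
  push_neg at hω1
  by_cases hcase : γ < U ω
  · -- X agrees with Y
    have : (fun i => X i ω) = (fun i => qf (μ i).toMeasure (U ω)) := by
      funext i; exact hagree i ω hcase
    show (f (fun i => qf (μ i).toMeasure (U ω)) ≤ a) = (f (fun i => X i ω) ≤ a)
    rw [this]
  · push_neg at hcase
    -- both sides hold
    have hY : f (fun i => qf (μ i).toMeasure (U ω)) ≤ a := by
      refine le_trans (le_trans (hf ?_) le_rfl) ha
      intro i
      exact qf_mono _ hω1 hcase hγ.2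
    have hX : f (fun i => X i ω) ≤ a := by
      refine le_trans (hf ?_) ha
      intro i
      have := hω2 i
      simp only [Set.mem_inter_iff, Set.mem_setOf_eq, not_and] at this
      by_contra hlt
      push_neg at hlt
      exact this hlt hcase
    show (f (fun i => qf (μ i).toMeasure (U ω)) ≤ a) = (f (fun i => X i ω) ≤ a)
    simp [hY, hX]
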